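/- For every natural number n ≥ 2, every λ ∈ [−1,1] and every x ∈ [0,1], the first central moment of the λ-Bernstein operator satisfies β_n(x) := B_{n,λ}(t − x; x) = λ(1 − 2x + x^{n+1} − (1−x)^{n+1})/(n(n−1)). -/

import Mathlib

open Finset Filter

noncomputable def bern (n i : ℕ) (x : ℝ) : ℝ :=
  (n.choose i : ℝ) * x ^ i * (1 - x) ^ (n - i)

noncomputable def bez (n : ℕ) (lam x : ℝ) (i : ℕ) : ℝ :=
  if i = 0 then bern n 0 x - lam / ((n : ℝ) + 1) * bern (n + 1) 1 x
  else if i = n then bern n n x - lam / ((n : ℝ) + 1) * bern (n + 1) n x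
  else bern n i x + lam * (((n : ℝ) - 2 * (i : ℝ) + 1) / ((n : ℝ) ^ 2 - 1) * bern (n + 1) i x
    - ((n : ℝ) - 2 * (i : ℝ) - 1) / ((n : ℝ) ^ 2 - 1) * bern (n + 1) (i + 1) x)

noncomputable def lB (n : ℕ) (lam : ℝ) (f : ℝ → ℝ) (x : ℝ) : ℝ :=
  ∑ i ∈ Finset.range (n + 1), f ((i : ℝ) / (n : ℝ)) * bez n lam x i

lemma bern_eq (n i : ℕ) (x : ℝ) : bern n i x = (bernsteinPolynomial ℝ n i).eval x := by
  simp [bern, bernsteinPolynomial]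

lemma sum_bern (m : ℕ) (x : ℝ) : ∑ i ∈ range (m+1), bern m i x = 1 := by
  simp only [bern_eq]
  rw [← Polynomial.eval_finset_sum]
  simp [bernsteinPolynomial.sum]

lemma sum_i_bern (m : ℕ) (x : ℝ) :
    ∑ i ∈ range (m+1), (i:ℝ) * bern m i x = m * x := by
  simp only [bern_eq]
  have h := congrArg (Polynomial.eval x) (bernsteinPolynomial.sum_smul ℝ m)
  simpa [Polynomial.eval_finset_sum, nsmul_eq_mul] using h

/-- the full (untruncated) telescoping coefficient -/
noncomputable def gaux (n : ℕ) (x : ℝ) (i : ℕ) : ℝ :=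
  ((n:ℝ) - 2*(i:ℝ) + 1)/((n:ℝ)^2 - 1) * bern (n+1) i x

/-- the truncated telescoping coefficient -/
noncomputable def aaux (n : ℕ) (x : ℝ) (i : ℕ) : ℝ :=
  if i = 0 ∨ i = n + 1 then 0 else gaux n x i

lemma aaux_zero (n : ℕ) (x : ℝ) : aaux n x 0 = 0 := by simp [aaux]

lemma aaux_top (n : ℕ) (x : ℝ) : aaux n x (n+1) = 0 := by simp [aaux]

lemma aaux_mid (n : ℕ) (x : ℝ) {i : ℕ} (h : ¬(i = 0 ∨ i = n + 1)) :
    aaux n x i = gaux n x i := by simp [aaux, h]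

theorem lB_first_central_moment (n : ℕ) (hn : 2 ≤ n) (lam : ℝ)
    (hlam : lam ∈ Set.Icc (-1 : ℝ) 1) (x : ℝ) (hx : x ∈ Set.Icc (0 : ℝ) 1) :
    lB n lam (fun t => t - x) x =
      lam * (1 - 2 * x + x ^ (n + 1) - (1 - x) ^ (n + 1)) / ((n : ℝ) * ((n : ℝ) - 1)) := by
  have hn2 : (2:ℝ) ≤ (n:ℝ) := by exact_mod_cast hn
  have hnR : (n:ℝ) ≠ 0 := by linarith
  have hn1 : (n:ℝ) - 1 ≠ 0 := by linarith
  have hnp1 : (n:ℝ) + 1 ≠ 0 := by linarith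
  have hd : (n:ℝ)^2 - 1 ≠ 0 := by nlinarith
  have key : ∀ i ∈ range (n+1),
      bez n lam x i = bern n i x + lam * (aaux n x i - aaux n x (i+1)) := by
    intro i hi
    rw [mem_range] at hi
    by_cases h0 : i = 0
    · subst h0
      have h1 : ¬ ((1:ℕ) = 0 ∨ (1:ℕ) = n + 1) := by omega
      rw [aaux_zero, aaux_mid n x h1, bez, if_pos rfl, gaux]
      have hc : ((n:ℝ) - 2*((1:ℕ):ℝ) + 1)/((n:ℝ)^2 - 1) = 1 / ((n:ℝ) + 1) := by
        rw [div_eq_div_iff hd hnp1]; push_cast; ring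
      rw [hc]; ring
    by_cases hni : i = n
    · have h1 : ¬ ((n:ℕ) = 0 ∨ (n:ℕ) = n + 1) := by omega
      have hnn0 : n ≠ 0 := by omega
      rw [hni, aaux_top, aaux_mid n x h1, bez, if_neg hnn0, if_pos rfl, gaux]
      have hc : ((n:ℝ) - 2*((n:ℕ):ℝ) + 1)/((n:ℝ)^2 - 1) = (-1) / ((n:ℝ) + 1) := by
        rw [div_eq_div_iff hd hnp1]; push_cast; ring
      rw [hc]; ring
    · have h1 : ¬ ((i:ℕ) = 0 ∨ i = n + 1) := by omega
      have h2 : ¬ ((i+1:ℕ) = 0 ∨ i + 1 = n + 1) := by omega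
      rw [aaux_mid n x h1, aaux_mid n x h2, bez, if_neg h0, if_neg hni, gaux, gaux]
      push_cast
      ring
  rw [lB, Finset.sum_congr rfl (fun i hi => by rw [key i hi])]
  have split : ∑ i ∈ range (n+1),
        ((i:ℝ)/(n:ℝ) - x) * (bern n i x + lam * (aaux n x i - aaux n x (i+1)))
      = (∑ i ∈ range (n+1), ((i:ℝ)/(n:ℝ) - x) * bern n i x)
        + lam * ∑ i ∈ range (n+1), ((i:ℝ)/(n:ℝ) - x) * (aaux n x i - aaux n x (i+1)) := by
    rw [Finset.mul_sum, ← Finset.sum_add_distrib]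
    exact Finset.sum_congr rfl (fun i _ => by ring)
  rw [split]
  have S1 : ∑ i ∈ range (n+1), ((i:ℝ)/(n:ℝ) - x) * bern n i x = 0 := by
    have h : ∀ i ∈ range (n+1), ((i:ℝ)/(n:ℝ) - x) * bern n i x
        = (1/(n:ℝ)) * ((i:ℝ) * bern n i x) - x * bern n i x := by
      intro i _; field_simp
    rw [Finset.sum_congr rfl h, Finset.sum_sub_distrib, ← Finset.mul_sum, ← Finset.mul_sum,
      sum_i_bern, sum_bern]
    field_simp
    ring
  rw [S1]
  -- Abel summation
  have habel : ∑ i ∈ range (n+1), ((i:ℝ)/(n:ℝ) - x) * (aaux n x i - aaux n x (i+1))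
      = (1/(n:ℝ)) * ∑ i ∈ range (n+1), aaux n x i := by
    have expand : ∀ i ∈ range (n+1), ((i:ℝ)/(n:ℝ) - x) * (aaux n x i - aaux n x (i+1))
        = ((i:ℝ)/(n:ℝ) - x) * aaux n x i - ((i:ℝ)/(n:ℝ) - x) * aaux n x (i+1) := fun i _ => by
      ring
    rw [Finset.sum_congr rfl expand, Finset.sum_sub_distrib]
    have hA : ∑ i ∈ range (n+1), ((i:ℝ)/(n:ℝ) - x) * aaux n x i
        = ∑ i ∈ range n, ((((i:ℕ):ℝ)+1)/(n:ℝ) - x) * aaux n x (i+1) := by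
      rw [Finset.sum_range_succ']
      simp [aaux_zero]
    have hB : ∑ i ∈ range (n+1), ((i:ℝ)/(n:ℝ) - x) * aaux n x (i+1)
        = ∑ i ∈ range n, ((i:ℝ)/(n:ℝ) - x) * aaux n x (i+1) := by
      rw [Finset.sum_range_succ, aaux_top]
      ring
    rw [hA, hB, ← Finset.sum_sub_distrib]
    have h : ∀ i ∈ range n,
        ((((i:ℕ):ℝ)+1)/(n:ℝ) - x) * aaux n x (i+1) - ((i:ℝ)/(n:ℝ) - x) * aaux n x (i+1)
        = (1/(n:ℝ)) * aaux n x (i+1) := by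
      intro i _
      field_simp
      ring
    rw [Finset.sum_congr rfl h, ← Finset.mul_sum]
    congr 1
    rw [Finset.sum_range_succ', aaux_zero, add_zero]
  rw [habel]
  -- compute the sum of aaux
  have hG : ∑ i ∈ range (n+1+1), gaux n x i
      = (((n:ℝ)+1) * (1 - 2*x)) / ((n:ℝ)^2 - 1) := by
    have hg : ∀ i ∈ range (n+1+1), gaux n x i
        = (((n:ℝ)+1)/((n:ℝ)^2-1)) * bern (n+1) i x
          - (2/((n:ℝ)^2-1)) * ((i:ℝ) * bern (n+1) i x) := by
      intro i _; rw [gaux]; field_simp; ring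
    rw [Finset.sum_congr rfl hg, Finset.sum_sub_distrib, ← Finset.mul_sum, ← Finset.mul_sum,
      sum_bern (n+1) x, sum_i_bern (n+1) x]
    push_cast
    field_simp
  have hsum : ∑ i ∈ range (n+1), aaux n x i
      = ((n:ℝ)+1) * (1 - 2*x + x^(n+1) - (1-x)^(n+1)) / ((n:ℝ)^2 - 1) := by
    have h1 : ∑ i ∈ range (n+1), aaux n x i
        = ∑ i ∈ range (n+1), gaux n x i - gaux n x 0 := by
      rw [Finset.sum_range_succ' (aaux n x), Finset.sum_range_succ' (gaux n x)]
      rw [aaux_zero]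
      have : ∀ i ∈ range n, aaux n x (i+1) = gaux n x (i+1) := by
        intro i hi
        rw [mem_range] at hi
        exact aaux_mid n x (by omega)
      rw [Finset.sum_congr rfl this]
      ring
    have h2 : ∑ i ∈ range (n+1), gaux n x i
        = (((n:ℝ)+1) * (1 - 2*x)) / ((n:ℝ)^2 - 1) - gaux n x (n+1) := by
      have h2' := Finset.sum_range_succ (gaux n x) (n+1)
      rw [← hG, h2']; ring
    have hg0 : gaux n x 0 = (((n:ℝ)+1)/((n:ℝ)^2-1)) * (1-x)^(n+1) := by
      simp [gaux, bern]
    have hgtop : gaux n x (n+1) = (-(((n:ℝ)+1))/((n:ℝ)^2-1)) * x^(n+1) := by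
      simp only [gaux, bern, Nat.choose_self, Nat.sub_self, pow_zero, Nat.cast_one]
      push_cast
      ring
    rw [h1, h2, hg0, hgtop]
    field_simp
    ring
  rw [hsum]
  field_simp
  ring
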